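/- An ℕ-valued random variable Z follows the Poisson distribution with parameter λ > 0 if and only if E[Z·f(Z)] = λ·E[f(Z+1)] holds for every function f : ℕ → ℝ such that both sides are well defined (e.g., for all bounded f). -/

import Mathlib

open MeasureTheory

set_option linter.unusedSectionVars false

section Aux

variable {Ω : Type*} [MeasurableSpace Ω] (μ : Measure Ω)
    [IsProbabilityMeasure μ] (Z : Ω → ℕ)

/-- Integral of a function of an ℕ-valued random variable as a sum. -/
lemma integral_comp_nat (hZ : Measurable Z) (g : ℕ → ℝ) (hint : Integrable (fun ω => g (Z ω)) μ) :
    ∫ ω, g (Z ω) ∂μ = ∑' k, (μ {ω | Z ω = k}).toReal * g k := by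
  have hg : Measurable g := measurable_from_top
  have hmap : Integrable g (Measure.map Z μ) := by
    rw [integrable_map_measure hg.aestronglyMeasurable hZ.aemeasurable]
    exact hint
  have h1 : ∫ ω, g (Z ω) ∂μ = ∫ n, g n ∂(Measure.map Z μ) :=
    (integral_map hZ.aemeasurable hg.aestronglyMeasurable).symm
  rw [h1, integral_countable' hmap]
  refine tsum_congr fun k => ?_
  rw [measureReal_def, Measure.map_apply hZ (measurableSet_singleton k)]
  rw [smul_eq_mul]
  rfl

lemma comp_integrable (hZ : Measurable Z) (g : ℕ → ℝ) (C : ℝ) (hC : ∀ x, |g x| ≤ C) :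
    Integrable (fun ω => g (Z ω)) μ := by
  have hg : Measurable g := measurable_from_top
  refine Integrable.mono' (integrable_const C) ((hg.comp hZ).aestronglyMeasurable) ?_
  exact Filter.Eventually.of_forall fun ω => hC (Z ω)

end Aux

lemma poisson_summable (lam : ℝ) :
    Summable (fun k : ℕ => Real.exp (-lam) * lam ^ k / (k.factorial : ℝ)) := by
  have := (Real.summable_pow_div_factorial lam).mul_left (Real.exp (-lam))
  convert this using 2 with k
  all_goals first | rfl | ring

lemma poisson_shift (lam : ℝ) (k : ℕ) :
    Real.exp (-lam) * lam ^ (k + 1) / ((k + 1).factorial : ℝ) * ((k : ℝ) + 1)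
      = lam * (Real.exp (-lam) * lam ^ k / (k.factorial : ℝ)) := by
  have h0 : ((k.factorial : ℝ)) ≠ 0 := Nat.cast_ne_zero.mpr k.factorial_ne_zero
  have h1 : (((k + 1).factorial : ℝ)) = ((k : ℝ) + 1) * (k.factorial : ℝ) := by
    rw [Nat.factorial_succ]; push_cast; ring
  have h2 : ((k : ℝ) + 1) ≠ 0 := by positivity
  rw [h1]
  field_simp
  ring

lemma poisson_mul_summable (lam : ℝ) :
    Summable (fun k : ℕ => Real.exp (-lam) * lam ^ k / (k.factorial : ℝ) * (k : ℝ)) := by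
  rw [← summable_nat_add_iff 1]
  have : (fun k : ℕ => Real.exp (-lam) * lam ^ (k + 1) / ((k + 1).factorial : ℝ) * ((k + 1 : ℕ) : ℝ))
      = fun k : ℕ => lam * (Real.exp (-lam) * lam ^ k / (k.factorial : ℝ)) := by
    funext k
    push_cast
    exact poisson_shift lam k
  rw [this]
  exact (poisson_summable lam).mul_left lam

/-- Chen's characterization: an `ℕ`-valued integrable random variable `Z` is Poisson
distributed with parameter `λ > 0` if and only if `E[Z·f(Z)] = λ·E[f(Z+1)]` for every
bounded function `f : ℕ → ℝ`. -/
theorem poisson_characterization {Ω : Type*} [MeasurableSpace Ω] (μ : Measure Ω)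
    [IsProbabilityMeasure μ] (Z : Ω → ℕ) (hZ : Measurable Z)
    (hZint : Integrable (fun ω => (Z ω : ℝ)) μ) (lam : ℝ) (hlam : 0 < lam) :
    (∀ k : ℕ, (μ {ω | Z ω = k}).toReal
        = Real.exp (-lam) * lam ^ k / (k.factorial : ℝ)) ↔
      ∀ f : ℕ → ℝ, (∃ C : ℝ, ∀ x : ℕ, |f x| ≤ C) →
        ∫ ω, (Z ω : ℝ) * f (Z ω) ∂μ = lam * ∫ ω, f (Z ω + 1) ∂μ := by
  set p : ℕ → ℝ := fun k => (μ {ω | Z ω = k}).toReal with hp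
  set q : ℕ → ℝ := fun k => Real.exp (-lam) * lam ^ k / (k.factorial : ℝ) with hq
  constructor
  · -- forward direction
    intro hP f hfb
    obtain ⟨C, hC⟩ := hfb
    have hC0 : 0 ≤ C := le_trans (abs_nonneg _) (hC 0)
    -- integrability of ω ↦ Z ω * f (Z ω)
    have hint1 : Integrable (fun ω => (Z ω : ℝ) * f (Z ω)) μ := by
      have hgm : Measurable fun n : ℕ => (n : ℝ) * f n := measurable_from_top
      refine Integrable.mono' (hZint.const_mul C) (hgm.comp hZ).aestronglyMeasurable ?_
      refine Filter.Eventually.of_forall fun ω => ?_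
      rw [Real.norm_eq_abs, abs_mul]
      calc |(Z ω : ℝ)| * |f (Z ω)| ≤ |(Z ω : ℝ)| * C :=
            mul_le_mul_of_nonneg_left (hC _) (abs_nonneg _)
        _ = C * (Z ω : ℝ) := by
            rw [abs_of_nonneg (by positivity : (0:ℝ) ≤ (Z ω : ℝ))]; ring
    have hint2 : Integrable (fun ω => f (Z ω + 1)) μ :=
      comp_integrable μ Z hZ (fun n => f (n + 1)) C (fun x => hC _)
    have key1 : ∫ ω, (Z ω : ℝ) * f (Z ω) ∂μ = ∑' k, p k * ((k : ℝ) * f k) :=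
      integral_comp_nat μ Z hZ (fun n => (n : ℝ) * f n) hint1
    have key2 : ∫ ω, f (Z ω + 1) ∂μ = ∑' k, p k * f (k + 1) :=
      integral_comp_nat μ Z hZ (fun n => f (n + 1)) hint2
    rw [key1, key2]
    have hPa : p = q := funext hP
    rw [hPa]
    -- summability
    have hsum : Summable (fun k : ℕ => q k * ((k : ℝ) * f k)) := by
      refine Summable.of_norm_bounded (g := fun k => C * (q k * (k : ℝ)))
        ((poisson_mul_summable lam).mul_left C) fun k => ?_
      have hq0 : 0 ≤ q k := by
        have : (0:ℝ) < Real.exp (-lam) := Real.exp_pos _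
        positivity
      rw [Real.norm_eq_abs, abs_mul, abs_mul, abs_of_nonneg hq0,
        abs_of_nonneg (by positivity : (0:ℝ) ≤ (k:ℝ))]
      calc q k * ((k:ℝ) * |f k|) ≤ q k * ((k:ℝ) * C) := by
            refine mul_le_mul_of_nonneg_left ?_ hq0
            exact mul_le_mul_of_nonneg_left (hC k) (by positivity)
        _ = C * (q k * (k:ℝ)) := by ring
    rw [hsum.tsum_eq_zero_add]
    have h00 : q 0 * ((0:ℕ) : ℝ) * f 0 = 0 := by simp
    have hterm : ∀ k : ℕ, q (k + 1) * (((k + 1 : ℕ) : ℝ) * f (k + 1))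
        = lam * (q k * f (k + 1)) := by
      intro k
      have := poisson_shift lam k
      push_cast
      calc q (k + 1) * (((k:ℝ) + 1) * f (k + 1))
          = (q (k + 1) * ((k:ℝ) + 1)) * f (k + 1) := by ring
        _ = (lam * q k) * f (k + 1) := by rw [hq]; rw [this]
        _ = lam * (q k * f (k + 1)) := by ring
    simp only [Nat.cast_zero, zero_mul, mul_zero, zero_add]
    rw [tsum_congr hterm, tsum_mul_left]
  · -- backward direction
    intro hE k
    -- recurrence: (k+1) * p (k+1) = lam * p k
    have hrec : ∀ k : ℕ, ((k : ℝ) + 1) * p (k + 1) = lam * p k := by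
      intro k
      have hbd : ∃ C : ℝ, ∀ x : ℕ, |(fun x => if x = k + 1 then (1:ℝ) else 0) x| ≤ C := by
        refine ⟨1, fun x => ?_⟩
        by_cases h : x = k + 1 <;> simp [h]
      have heq := hE (fun x => if x = k + 1 then (1:ℝ) else 0) hbd
      have hmeas1 : MeasurableSet {ω | Z ω = k + 1} := hZ (measurableSet_singleton (k+1))
      have hmeas0 : MeasurableSet {ω | Z ω = k} := hZ (measurableSet_singleton k)
      have hL : (fun ω => (Z ω : ℝ) * (if Z ω = k + 1 then (1:ℝ) else 0))
          = Set.indicator {ω | Z ω = k + 1} (fun _ => ((k:ℝ) + 1)) := by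
        funext ω
        by_cases h : Z ω = k + 1 <;> simp [h, Set.indicator_apply, Set.mem_setOf_eq]
      have hR : (fun ω => (if Z ω + 1 = k + 1 then (1:ℝ) else 0))
          = Set.indicator {ω | Z ω = k} (fun _ => (1:ℝ)) := by
        funext ω
        by_cases h : Z ω = k <;> simp [h, Set.indicator_apply, Set.mem_setOf_eq]
      rw [hL, hR, integral_indicator_const _ hmeas1, integral_indicator_const _ hmeas0] at heq
      rw [smul_eq_mul, smul_eq_mul, mul_one] at heq
      rw [hp]
      calc ((k : ℝ) + 1) * (μ {ω | Z ω = k + 1}).toReal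
          = (μ {ω | Z ω = k + 1}).toReal * ((k:ℝ) + 1) := by ring
        _ = lam * (μ {ω | Z ω = k}).toReal := heq
    -- p k = p 0 * lam^k / k!
    have hform : ∀ k : ℕ, p k = p 0 * lam ^ k / (k.factorial : ℝ) := by
      intro k
      induction k with
      | zero => simp
      | succ n ih =>
        have h1 : ((n : ℝ) + 1) ≠ 0 := by positivity
        have h2 : ((n.factorial : ℝ)) ≠ 0 := Nat.cast_ne_zero.mpr n.factorial_ne_zero
        have hfac : (((n + 1).factorial : ℝ)) = ((n:ℝ) + 1) * (n.factorial : ℝ) := by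
          rw [Nat.factorial_succ]; push_cast; ring
        have hstep : p (n + 1) = lam * p n / ((n:ℝ) + 1) := by
          rw [eq_div_iff h1, ← hrec n]; ring
        rw [hstep, ih, hfac, pow_succ]
        field_simp
    -- total mass is 1
    have htot : ∑' k : ℕ, p k = 1 := by
      have hdisj : Pairwise (Function.onFun Disjoint fun k : ℕ => {ω | Z ω = k}) := by
        intro i j hij
        refine Set.disjoint_left.mpr fun ω hi hj => hij ?_
        rw [Set.mem_setOf_eq] at hi hj
        rw [← hi, ← hj]
      have hmeas : ∀ k : ℕ, MeasurableSet {ω | Z ω = k} :=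
        fun k => hZ (measurableSet_singleton k)
      have hunion : (⋃ k : ℕ, {ω | Z ω = k}) = Set.univ := by
        ext ω; simp
      have h1 : ∑' k : ℕ, μ {ω | Z ω = k} = 1 := by
        rw [← measure_iUnion hdisj hmeas, hunion, measure_univ]
      have h2 : ∑' k : ℕ, p k = (∑' k : ℕ, μ {ω | Z ω = k}).toReal := by
        rw [ENNReal.tsum_toReal_eq fun k => measure_ne_top μ _]
      rw [h2, h1, ENNReal.toReal_one]
    -- deduce p 0 = exp (-lam)
    have hexp : Real.exp lam = ∑' n : ℕ, lam ^ n / (n.factorial : ℝ) := by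
      rw [Real.exp_eq_exp_ℝ, NormedSpace.exp_eq_tsum_div]
    have hsum0 : ∑' k : ℕ, p 0 * (lam ^ k / (k.factorial : ℝ)) = p 0 * Real.exp lam := by
      rw [tsum_mul_left, ← hexp]
    have h3 : ∑' k : ℕ, p k = p 0 * Real.exp lam := by
      rw [← hsum0]
      refine tsum_congr fun k => ?_
      rw [hform k]; ring
    have hp0 : p 0 = Real.exp (-lam) := by
      have h4 : p 0 * Real.exp lam = 1 := by rw [← h3, htot]
      have h5 : Real.exp lam ≠ 0 := (Real.exp_pos lam).ne'
      rw [Real.exp_neg]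
      field_simp at h4 ⊢
      linarith
    show p k = Real.exp (-lam) * lam ^ k / (k.factorial : ℝ)
    rw [hform k, hp0]
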